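/- Let G be a Hausdorff topological group whose center is trivial. If G contains a dense normal subgroup N that is simple as an abstract group, then G is topologically simple: every nontrivial normal subgroup of G is dense in G. -/

import Mathlib

/-- Let `G` be a Hausdorff topological group with trivial center.  If `G`
contains a dense normal subgroup `N` that is simple as an abstract group, then `G` is
topologically simple: every nontrivial normal subgroup of `G` is dense in `G`. -/
theorem stmt_9 {G : Type*} [Group G] [TopologicalSpace G] [IsTopologicalGroup G] [T2Space G]
    (hcenter : Subgroup.center G = ⊥)
    (N : Subgroup G) (hNnormal : N.Normal) (hNdense : Dense (N : Set G))
    (hNsimple : IsSimpleGroup N) :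
    ∀ H : Subgroup G, H.Normal → H ≠ ⊥ → Dense (H : Set G) := by
  intro H hHnorm hHne
  -- pick a nontrivial element of H
  obtain ⟨⟨h, hhH⟩, hh1'⟩ := Subgroup.ne_bot_iff_exists_ne_one.mp hHne
  have hh1 : h ≠ 1 := fun e => hh1' (Subtype.ext e)
  -- find n ∈ N not commuting with h
  have hnc : ∃ n ∈ N, h * n ≠ n * h := by
    by_contra hc
    push_neg at hc
    have hcl : IsClosed {g : G | h * g = g * h} :=
      isClosed_eq (continuous_const.mul continuous_id) (continuous_id.mul continuous_const)
    have hsub : (N : Set G) ⊆ {g : G | h * g = g * h} := fun g hg => hc g hg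
    have : ∀ g : G, h * g = g * h := by
      intro g
      have := hcl.closure_subset_iff.mpr hsub
      exact this (hNdense.closure_eq ▸ Set.mem_univ g : g ∈ closure (N : Set G))
    have hcen : h ∈ Subgroup.center G := Subgroup.mem_center_iff.mpr fun g => (this g).symm
    rw [hcenter, Subgroup.mem_bot] at hcen
    exact hh1 hcen
  obtain ⟨n, hnN, hne⟩ := hnc
  set c := h⁻¹ * (n⁻¹ * h * n) with hc
  have hcH : c ∈ H := H.mul_mem (H.inv_mem hhH) (hHnorm.conj_mem' h hhH n)
  have hcN : c ∈ N := by
    have he : c = (h⁻¹ * n⁻¹ * h) * n := by simp only [hc]; group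
    rw [he]
    exact N.mul_mem (hNnormal.conj_mem' n⁻¹ (N.inv_mem hnN) h) hnN
  have hc1 : c ≠ 1 := by
    intro heq
    apply hne
    have e : h = n⁻¹ * h * n := inv_mul_eq_one.mp heq
    calc h * n = n * (n⁻¹ * h * n) := by group
    _ = n * h := by rw [← e]
  -- H ∩ N viewed inside N is a nontrivial normal subgroup
  haveI := hNsimple
  haveI := hHnorm
  have hKnorm : (H.subgroupOf N).Normal := Subgroup.normal_subgroupOf
  have hKne : H.subgroupOf N ≠ ⊥ := by
    intro hbot
    have : (⟨c, hcN⟩ : N) ∈ H.subgroupOf N := hcH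
    rw [hbot, Subgroup.mem_bot] at this
    exact hc1 (Subtype.ext_iff.mp this)
  have hKtop : H.subgroupOf N = ⊤ :=
    (hKnorm.eq_bot_or_eq_top).resolve_left hKne
  have hNH : N ≤ H := Subgroup.subgroupOf_eq_top.mp hKtop
  exact hNdense.mono hNH
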